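/- For every k ≥ 1, the subdivided star obtained from the star K_{1,k} by subdividing every edge exactly once (a tree of order n = 2k + 1) has neighborhood total domination number γnt equal to k + 1 = (n + 1)/2. -/

import Mathlib

open SimpleGraph

variable {V : Type*}

/-- The open neighborhood `N(S)` of a set `S` of vertices: all vertices having a neighbor in `S`. -/
def openNbhd (G : SimpleGraph V) (S : Set V) : Set V := {v | ∃ u ∈ S, G.Adj u v}

/-- `S` is a dominating set: every vertex not in `S` has a neighbor in `S`. -/
def IsDomSet (G : SimpleGraph V) (S : Set V) : Prop := ∀ v ∉ S, ∃ u ∈ S, G.Adj u v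

/-- `S` is a total dominating set: every vertex has a neighbor in `S`. -/
def IsTotalDomSet (G : SimpleGraph V) (S : Set V) : Prop := ∀ v, ∃ u ∈ S, G.Adj u v

/-- `S` is a neighborhood total dominating set: a dominating set such that the subgraph
induced by the open neighborhood `N(S)` has no isolated vertex. -/
def IsNTDSet (G : SimpleGraph V) (S : Set V) : Prop :=
  IsDomSet G S ∧ ∀ v ∈ openNbhd G S, ∃ u ∈ openNbhd G S, G.Adj v u

/-- The domination number `γ(G)`. -/
noncomputable def domNum (G : SimpleGraph V) : ℕ :=
  sInf {n | ∃ S : Set V, IsDomSet G S ∧ S.ncard = n}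

/-- The total domination number `γt(G)`. -/
noncomputable def totalDomNum (G : SimpleGraph V) : ℕ :=
  sInf {n | ∃ S : Set V, IsTotalDomSet G S ∧ S.ncard = n}

/-- The neighborhood total domination number `γnt(G)`. -/
noncomputable def ntdNum (G : SimpleGraph V) : ℕ :=
  sInf {n | ∃ S : Set V, IsNTDSet G S ∧ S.ncard = n}

/-- The subdivided star obtained from the star `K_{1,k}` by subdividing every edge exactly
once: vertex `0` is the center, adjacent to `1, ..., k`, and each `i` (for `1 ≤ i ≤ k`) is
adjacent to the leaf `k + i`. It has order `2 * k + 1`. -/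
def subdividedStar (k : ℕ) : SimpleGraph (Fin (2 * k + 1)) :=
  SimpleGraph.fromRel (fun a b =>
    (a.val = 0 ∧ 1 ≤ b.val ∧ b.val ≤ k) ∨ (1 ≤ a.val ∧ a.val ≤ k ∧ b.val = a.val + k))


private lemma sdstar_adj (k : ℕ) (a b : Fin (2*k+1)) :
    (subdividedStar k).Adj a b ↔ a.val ≠ b.val ∧
      ((a.val = 0 ∧ 1 ≤ b.val ∧ b.val ≤ k) ∨ (1 ≤ a.val ∧ a.val ≤ k ∧ b.val = a.val + k) ∨
       (b.val = 0 ∧ 1 ≤ a.val ∧ a.val ≤ k) ∨ (1 ≤ b.val ∧ b.val ≤ k ∧ a.val = b.val + k)) := by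
  show (a ≠ b ∧ _) ↔ _
  rw [Ne, Fin.ext_iff]
  tauto

private lemma sdstar_Icc_ncard (k : ℕ) : (Set.Icc 1 k).ncard = k := by
  rw [← Finset.coe_Icc, Set.ncard_coe_finset, Nat.card_Icc]; omega

private lemma sdstar_lower (k : ℕ) (hk : 1 ≤ k) (S : Set (Fin (2*k+1)))
    (hS : IsNTDSet (subdividedStar k) S) : k + 1 ≤ S.ncard := by
  by_contra hlt
  push_neg at hlt
  have hcard : S.ncard ≤ k := by omega
  have hSfin : S.Finite := S.toFinite
  set f : Fin (2*k+1) → ℕ := fun v => if v.val ≤ k then v.val else v.val - k with hf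
  have hhit : ∀ i, 1 ≤ i → i ≤ k → ∃ v ∈ S, f v = i := by
    intro i h1 h2
    by_cases hin : (⟨k+i, by omega⟩ : Fin (2*k+1)) ∈ S
    · exact ⟨_, hin, by simp only [hf, Fin.val_mk]; split <;> omega⟩
    · obtain ⟨u, huS, hadj⟩ := hS.1 _ hin
      rw [sdstar_adj] at hadj
      refine ⟨u, huS, ?_⟩
      simp only [Fin.val_mk] at hadj
      have hu2k := u.isLt
      simp only [hf]
      split <;> omega
  have hsub : Set.Icc 1 k ⊆ f '' S := by
    intro i hi
    obtain ⟨v, hv, hfv⟩ := hhit i hi.1 hi.2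
    exact ⟨v, hv, hfv⟩
  have h0 : (⟨0, by omega⟩ : Fin (2*k+1)) ∉ S := by
    intro h0S
    have hins : insert 0 (Set.Icc 1 k) ⊆ f '' S := by
      rintro j (rfl | hj)
      · exact ⟨_, h0S, by simp only [hf, Fin.val_mk]; split <;> omega⟩
      · exact hsub hj
    have hc : (insert 0 (Set.Icc 1 k)).ncard = k + 1 := by
      rw [Set.ncard_insert_of_notMem (by simp) (Set.finite_Icc _ _), sdstar_Icc_ncard]
    have h1 := Set.ncard_le_ncard hins (hSfin.image f)
    have h2 := Set.ncard_image_le hSfin (f := f)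
    omega
  obtain ⟨u, huS, hadj0⟩ := hS.1 _ h0
  rw [sdstar_adj] at hadj0
  simp only [Fin.val_mk] at hadj0
  have hu : 1 ≤ u.val ∧ u.val ≤ k := by omega
  have hu2k := u.isLt
  set w : Fin (2*k+1) := ⟨u.val + k, by omega⟩ with hw
  have hwval : w.val = u.val + k := rfl
  by_cases hwS : w ∈ S
  · -- counting contradiction: image of S \ {w} still covers Icc 1 k
    have hsub' : Set.Icc 1 k ⊆ f '' (S \ {w}) := by
      intro j hj
      obtain ⟨v, hv, hfv⟩ := hhit j hj.1 hj.2
      by_cases hvw : v = w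
      · subst hvw
        refine ⟨u, ⟨huS, ?_⟩, ?_⟩
        · simp only [Set.mem_singleton_iff]
          intro h
          have := congrArg Fin.val h
          rw [hwval] at this
          omega
        · simp only [hf, hwval] at hfv ⊢
          split at hfv <;> split <;> omega
      · exact ⟨v, ⟨hv, hvw⟩, hfv⟩
    have h1 := Set.ncard_le_ncard hsub' ((hSfin.diff (t := {w})).image f)
    have h2 := Set.ncard_image_le (hSfin.diff (t := {w})) (f := f)
    have h3 : (S \ {w}).ncard = S.ncard - 1 := Set.ncard_diff_singleton_of_mem hwS
    have h4 : 1 ≤ S.ncard := (Set.ncard_pos hSfin).mpr ⟨u, huS⟩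
    have h5 := sdstar_Icc_ncard k
    omega
  · -- NTD contradiction at leaf w
    have hwN : w ∈ openNbhd (subdividedStar k) S := by
      refine ⟨u, huS, ?_⟩
      rw [sdstar_adj, hwval]
      omega
    obtain ⟨x, hxN, hadjwx⟩ := hS.2 w hwN
    rw [sdstar_adj, hwval] at hadjwx
    have hxu : x = u := by
      apply Fin.ext
      have := x.isLt
      omega
    rw [hxu] at hxN
    obtain ⟨y, hyS, hadjyu⟩ := hxN
    rw [sdstar_adj] at hadjyu
    have hy : y.val = 0 ∨ y.val = u.val + k := by omega
    rcases hy with h | h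
    · exact h0 (by rwa [show (⟨0, by omega⟩ : Fin (2*k+1)) = y from Fin.ext h.symm])
    · exact hwS (by rwa [show w = y from Fin.ext (by rw [hwval, h])])

private lemma sdstar_upper (k : ℕ) (hk : 1 ≤ k) :
    ∃ S : Set (Fin (2*k+1)), IsNTDSet (subdividedStar k) S ∧ S.ncard = k + 1 := by
  refine ⟨{v | v.val ≤ k}, ⟨?_, ?_⟩, ?_⟩
  · intro v hv
    simp only [Set.mem_setOf_eq, not_le] at hv
    have := v.isLt
    refine ⟨⟨v.val - k, by omega⟩, by simp only [Set.mem_setOf_eq, Fin.val_mk]; omega, ?_⟩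
    rw [sdstar_adj]
    simp only [Fin.val_mk, true_and, and_true, false_and, and_false,
      true_or, or_true, false_or, or_false]
    omega
  · intro v _
    have hvlt := v.isLt
    rcases show v.val = 0 ∨ (1 ≤ v.val ∧ v.val ≤ k) ∨ k + 1 ≤ v.val by omega with h | h | h
    · refine ⟨⟨1, by omega⟩, ⟨⟨0, by omega⟩, by simp, ?_⟩, ?_⟩ <;>
        (rw [sdstar_adj];
         simp only [Fin.val_mk, true_and, and_true, false_and, and_false,
           true_or, or_true, false_or, or_false];
         omega)
    · refine ⟨⟨0, by omega⟩, ⟨⟨1, by omega⟩, by simp [hk], ?_⟩, ?_⟩ <;>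
        (rw [sdstar_adj];
         simp only [Fin.val_mk, true_and, and_true, false_and, and_false,
           true_or, or_true, false_or, or_false];
         omega)
    · refine ⟨⟨v.val - k, by omega⟩, ⟨⟨0, by omega⟩, by simp, ?_⟩, ?_⟩ <;>
        (rw [sdstar_adj];
         simp only [Fin.val_mk, true_and, and_true, false_and, and_false,
           true_or, or_true, false_or, or_false];
         omega)
  · have heq : {v : Fin (2*k+1) | v.val ≤ k} =
        (Fin.castLE (by omega : k + 1 ≤ 2*k+1)) '' Set.univ := by
      ext v
      simp only [Set.image_univ, Set.mem_setOf_eq, Set.mem_range]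
      constructor
      · intro h
        exact ⟨⟨v.val, by omega⟩, Fin.ext rfl⟩
      · rintro ⟨i, rfl⟩
        simpa using Nat.lt_succ_iff.mp i.isLt
    rw [heq, Set.ncard_image_of_injective _ (Fin.castLE_injective _), Set.ncard_univ,
      Nat.card_eq_fintype_card, Fintype.card_fin]

theorem stmt5 (k : ℕ) (hk : 1 ≤ k) : ntdNum (subdividedStar k) = k + 1 := by
  obtain ⟨S, hS, hcard⟩ := sdstar_upper k hk
  unfold ntdNum
  apply le_antisymm
  · exact Nat.sInf_le ⟨S, hS, hcard⟩
  · refine le_csInf ⟨k + 1, S, hS, hcard⟩ ?_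
    rintro n ⟨T, hT, rfl⟩
    exact sdstar_lower k hk T hT
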